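/- Let N, M ≥ 1 and let k, l ∈ ℂ with k ≠ l. Let K = J^{[N]}[k] be the N×N lower-triangular Jordan block and let L = (J^{[M]}[l])ᵀ. Let G be the N×M matrix with entries g_{ij} = C(i+j−2, i−1)·(−1)^{i−1}/(k−l)^{i+j−1}, where C(n, m) is the binomial coefficient. Then K·G − G·L = e₁⁽ᴺ⁾·(e₁⁽ᴹ⁾)ᵀ. -/

import Mathlib

open Matrix

/-- The `N×N` lower-triangular Jordan block with `k` on the diagonal and `1` on the
first subdiagonal. -/
def jordanBlock (N : ℕ) (k : ℂ) : Matrix (Fin N) (Fin N) ℂ :=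
  Matrix.of fun i j =>
    if (i : ℕ) = (j : ℕ) then k else if (i : ℕ) = (j : ℕ) + 1 then 1 else 0

lemma jordan_sum {n : ℕ} (k : ℂ) (f : Fin (n+1) → ℂ) (i : Fin (n+1)) :
    ∑ m : Fin (n+1), (if (i : ℕ) = (m : ℕ) then k else if (i : ℕ) = (m : ℕ) + 1 then 1 else 0) * f m
      = k * f i + (if hi : (i : ℕ) = 0 then 0 else f ⟨(i:ℕ) - 1, by omega⟩) := by
  have hsplit : ∀ m : Fin (n+1),
      (if (i : ℕ) = (m : ℕ) then k else if (i : ℕ) = (m : ℕ) + 1 then 1 else 0) * f m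
        = (if m = i then k * f m else 0) + (if (i : ℕ) = (m : ℕ) + 1 then f m else 0) := by
    intro m
    by_cases h1 : (i : ℕ) = (m : ℕ)
    · have hm : m = i := Fin.ext h1.symm
      have h2 : ¬ (i : ℕ) = (m : ℕ) + 1 := by omega
      simp [h1, hm, h2]
    · have hm : ¬ m = i := fun hc => h1 (by rw [hc])
      simp only [if_neg h1, if_neg hm, zero_add]
      split_ifs <;> ring
  rw [Finset.sum_congr rfl fun m _ => hsplit m, Finset.sum_add_distrib,
    Finset.sum_ite_eq' Finset.univ i (fun m => k * f m)]
  simp only [Finset.mem_univ, if_true]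
  congr 1
  by_cases hi : (i : ℕ) = 0
  · simp [hi]
  · rw [dif_neg hi]
    rw [Finset.sum_eq_single (⟨(i:ℕ) - 1, by omega⟩ : Fin (n+1))]
    · simp [Nat.sub_add_cancel (Nat.one_le_iff_ne_zero.mpr hi)]
    · intro m _ hm
      have : (i : ℕ) ≠ (m : ℕ) + 1 := by
        intro hc
        apply hm; apply Fin.ext; simp [hc]
      simp [this]
    · simp


/-- the matrix `G` with (1-based) entries
`g_{ij} = C(i+j−2, i−1)·(−1)^{i−1}/(k−l)^{i+j−1}` solves the Sylvester equation
`K·G − G·L = e₁·e₁ᵀ` with `K = J^{[N]}[k]`, `L = (J^{[M]}[l])ᵀ`. -/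
theorem jordan_sylvester_difference (N M : ℕ) (hN : 1 ≤ N) (hM : 1 ≤ M)
    (k l : ℂ) (hkl : k ≠ l)
    (G : Matrix (Fin N) (Fin M) ℂ)
    (hG : G = Matrix.of fun (i : Fin N) (j : Fin M) =>
      (Nat.choose ((i : ℕ) + (j : ℕ)) (i : ℕ) : ℂ) * (-1 : ℂ) ^ (i : ℕ) /
        (k - l) ^ ((i : ℕ) + (j : ℕ) + 1))
    (e1N : Fin N → ℂ) (he1N : e1N = fun (i : Fin N) => if (i : ℕ) = 0 then (1 : ℂ) else 0)
    (e1M : Fin M → ℂ) (he1M : e1M = fun (i : Fin M) => if (i : ℕ) = 0 then (1 : ℂ) else 0) :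
    jordanBlock N k * G - G * (jordanBlock M l)ᵀ = Matrix.vecMulVec e1N e1M := by
  subst hG he1N he1M
  have hd : k - l ≠ 0 := sub_ne_zero.mpr hkl
  obtain ⟨n, rfl⟩ : ∃ n, N = n + 1 := ⟨N - 1, by omega⟩
  obtain ⟨m, rfl⟩ : ∃ m, M = m + 1 := ⟨M - 1, by omega⟩
  ext i j
  rw [Matrix.sub_apply, Matrix.mul_apply, Matrix.mul_apply, Matrix.vecMulVec_apply]
  simp only [jordanBlock, Matrix.of_apply, Matrix.transpose_apply]
  rw [jordan_sum k (fun x => (Nat.choose ((x : ℕ) + (j : ℕ)) (x : ℕ) : ℂ) * (-1 : ℂ) ^ (x : ℕ) /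
        (k - l) ^ ((x : ℕ) + (j : ℕ) + 1)) i]
  have : ∀ x : Fin (m+1),
      ((Nat.choose ((i : ℕ) + (x : ℕ)) (i : ℕ) : ℂ) * (-1 : ℂ) ^ (i : ℕ) /
        (k - l) ^ ((i : ℕ) + (x : ℕ) + 1)) *
        (if (j : ℕ) = (x : ℕ) then l else if (j : ℕ) = (x : ℕ) + 1 then 1 else 0)
      = (if (j : ℕ) = (x : ℕ) then l else if (j : ℕ) = (x : ℕ) + 1 then 1 else 0) *
        ((Nat.choose ((i : ℕ) + (x : ℕ)) (i : ℕ) : ℂ) * (-1 : ℂ) ^ (i : ℕ) /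
        (k - l) ^ ((i : ℕ) + (x : ℕ) + 1)) := fun x => mul_comm _ _
  rw [Finset.sum_congr rfl fun x _ => this x,
    jordan_sum l (fun x => (Nat.choose ((i : ℕ) + (x : ℕ)) (i : ℕ) : ℂ) * (-1 : ℂ) ^ (i : ℕ) /
        (k - l) ^ ((i : ℕ) + (x : ℕ) + 1)) j]
  by_cases hi : (i : ℕ) = 0 <;> by_cases hj : (j : ℕ) = 0
  · simp only [hi, hj, dif_pos, if_pos]
    norm_num
    field_simp
  · obtain ⟨b, hb⟩ : ∃ b, (j : ℕ) = b + 1 := ⟨(j : ℕ) - 1, by omega⟩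
    simp only [hi, hj, hb, dif_pos, dif_neg, if_pos, if_neg, Nat.add_sub_cancel]
    norm_num
    field_simp
    ring
  · obtain ⟨a, ha⟩ : ∃ a, (i : ℕ) = a + 1 := ⟨(i : ℕ) - 1, by omega⟩
    simp only [hi, hj, ha, dif_pos, dif_neg, if_pos, if_neg, Nat.add_sub_cancel]
    norm_num [Nat.choose_self]
    field_simp
    ring
  · obtain ⟨a, ha⟩ : ∃ a, (i : ℕ) = a + 1 := ⟨(i : ℕ) - 1, by omega⟩
    obtain ⟨b, hb⟩ : ∃ b, (j : ℕ) = b + 1 := ⟨(j : ℕ) - 1, by omega⟩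
    simp only [hi, hj, ha, hb, dif_neg, if_neg, Nat.add_sub_cancel, Nat.add_one_ne_zero, ↓reduceDIte, ↓reduceIte]
    have pascal : ((a + b + 2).choose (a + 1) : ℂ)
        = ((a + b + 1).choose a : ℂ) + ((a + b + 1).choose (a + 1) : ℂ) := by
      exact_mod_cast Nat.choose_succ_succ (a + b + 1) a
    rw [show a + 1 + (b + 1) = a + b + 2 from by omega]
    rw [show a + (b + 1) = a + b + 1 from by omega, show a + 1 + b = a + b + 1 from by omega]
    rw [pascal]
    field_simp
    ring
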